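/- arXiv:2207.04380 — 13 statements merged into one kernel-verified Lean document; each statement's English description precedes it below -/
import Mathlib

section
/- For probability mass functions P and Q on a countable type Ω and a real number α ≥ 0, the supremum over all subsets S ⊆ Ω of P(S) − α·Q(S) equals ∑_ω max(P(ω) − α·Q(ω), 0), and moreover this quantity equals ∑_{ω : P(ω) > 0} P(ω)·max(1 − α·Q(ω)/P(ω), 0). -/
/-- The α-hockey-stick divergence between two PMFs. -/
noncomputable def hsDiv {Ω : Type*} (α : ℝ) (P Q : PMF Ω) : ℝ :=
  ∑' ω, max ((P ω).toReal - α * (Q ω).toReal) 0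

/-- For PMFs `P, Q` on a countable type and `α ≥ 0`, the supremum over all subsets `S`
of `P(S) - α·Q(S)` equals `∑_ω [P(ω) - α·Q(ω)]₊`, which in turn equals
`∑_{ω : P(ω) > 0} P(ω)·[1 - α·Q(ω)/P(ω)]₊`. -/
theorem hockey_stick_sup_eq_tsum {Ω : Type*} [Countable Ω] (P Q : PMF Ω)
    (α : ℝ) (hα : 0 ≤ α) :
    (⨆ S : Set Ω, ((∑' ω : S, (P ω).toReal) - α * ∑' ω : S, (Q ω).toReal))
        = ∑' ω, max ((P ω).toReal - α * (Q ω).toReal) 0 ∧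
    (∑' ω, max ((P ω).toReal - α * (Q ω).toReal) 0)
        = ∑' ω : {ω : Ω // 0 < (P ω).toReal},
            (P ω.1).toReal * max (1 - α * (Q ω.1).toReal / (P ω.1).toReal) 0 := by
  have hPs : Summable (fun ω => (P ω).toReal) := by
    apply ENNReal.summable_toReal
    rw [P.tsum_coe]; exact ENNReal.one_ne_top
  have hQs : Summable (fun ω => (Q ω).toReal) := by
    apply ENNReal.summable_toReal
    rw [Q.tsum_coe]; exact ENNReal.one_ne_top
  set f : Ω → ℝ := fun ω => max ((P ω).toReal - α * (Q ω).toReal) 0 with hf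
  have hfnn : ∀ ω, 0 ≤ f ω := fun ω => le_max_right _ _
  have hfle : ∀ ω, f ω ≤ (P ω).toReal := by
    intro ω
    apply max_le
    · nlinarith [ENNReal.toReal_nonneg (a := Q ω)]
    · exact ENNReal.toReal_nonneg
  have hfs : Summable f := Summable.of_nonneg_of_le hfnn hfle hPs
  -- expression for each S
  have key : ∀ S : Set Ω,
      ((∑' ω : S, (P ω).toReal) - α * ∑' ω : S, (Q ω).toReal)
        = ∑' ω : S, ((P ω).toReal - α * (Q ω).toReal) := by
    intro S
    rw [← tsum_mul_left]
    exact (Summable.tsum_sub (hPs.subtype S) ((hQs.mul_left α).subtype S)).symm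
  have hub : ∀ S : Set Ω,
      ((∑' ω : S, (P ω).toReal) - α * ∑' ω : S, (Q ω).toReal) ≤ ∑' ω, f ω := by
    intro S
    rw [key S]
    calc ∑' ω : S, ((P ω).toReal - α * (Q ω).toReal)
        ≤ ∑' ω : S, f (ω : Ω) := by
          apply Summable.tsum_le_tsum (fun ω => le_max_left _ _)
          · exact ((hPs.subtype S).sub ((hQs.subtype S).mul_left α))
          · exact hfs.subtype S
      _ ≤ ∑' ω, f ω := by
          apply Summable.tsum_le_tsum_of_inj (Subtype.val) Subtype.val_injective
            (fun c _ => hfnn c) (fun b => le_rfl) (hfs.subtype S) hfs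
  constructor
  · apply le_antisymm (ciSup_le hub)
    set S₀ : Set Ω := {ω | α * (Q ω).toReal < (P ω).toReal} with hS₀
    have hval : ((∑' ω : S₀, (P ω).toReal) - α * ∑' ω : S₀, (Q ω).toReal) = ∑' ω, f ω := by
      rw [key S₀]
      have h1 : ∀ ω : S₀, ((P ω).toReal - α * (Q ω).toReal) = f (ω : Ω) := by
        rintro ⟨ω, hω⟩
        simp only [hf]
        rw [max_eq_left]
        exact le_of_lt (by simpa [hS₀] using hω)
      rw [tsum_congr h1]
      apply tsum_subtype_eq_of_support_subset
      intro ω hω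
      simp only [Function.mem_support, hf] at hω
      have : 0 < (P ω).toReal - α * (Q ω).toReal := by
        by_contra h
        push_neg at h
        exact hω (max_eq_right h)
      simpa [hS₀] using by linarith
    calc ∑' ω, f ω = _ := hval.symm
      _ ≤ _ := le_ciSup ⟨∑' ω, f ω, by rintro x ⟨S, rfl⟩; exact hub S⟩ S₀
  · symm
    have h1 : ∀ ω : {ω : Ω // 0 < (P ω).toReal},
        (P ω.1).toReal * max (1 - α * (Q ω.1).toReal / (P ω.1).toReal) 0 = f (ω : Ω) := by
      rintro ⟨ω, hω⟩
      simp only [hf]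
      rw [mul_max_of_nonneg _ _ (le_of_lt hω), mul_zero]
      congr 1
      field_simp
    rw [tsum_congr h1]
    apply tsum_subtype_eq_of_support_subset
    intro ω hω
    simp only [Function.mem_support, hf] at hω
    by_contra h
    have h' : ¬ 0 < (P ω).toReal := h
    push_neg at h'
    replace h := h'
    have hP0 : (P ω).toReal = 0 := le_antisymm h ENNReal.toReal_nonneg
    apply hω
    rw [hP0, zero_sub, max_eq_right]
    nlinarith [ENNReal.toReal_nonneg (a := Q ω)]
end

section
/- Let A, B be PMFs on a countable type Ω, A′, B′ PMFs on a countable type Ω′, P, Q PMFs on a countable type Γ, and P′, Q′ PMFs on a countable type Γ′. If D_α(A‖B) ≤ D_α(P‖Q) for all real α ≥ 0, and D_α(A′‖B′) ≤ D_α(P′‖Q′) for all real α ≥ 0, then D_α(A ⊗ A′ ‖ B ⊗ B′) ≤ D_α(P ⊗ P′ ‖ Q ⊗ Q′) for all real α ≥ 0. -/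
set_option maxHeartbeats 1000000


/-- The product of two PMFs: `(P ⊗ P')(ω, ω') = P(ω) · P'(ω')`. -/
noncomputable def pmfProd {Ω Ω' : Type*} (P : PMF Ω) (P' : PMF Ω') : PMF (Ω × Ω') :=
  P.bind fun ω => P'.map fun ω' => (ω, ω')

lemma pmfProd_apply {Ω Ω' : Type*} (P : PMF Ω) (P' : PMF Ω') (p : Ω × Ω') :
    pmfProd P P' p = P p.1 * P' p.2 := by
  obtain ⟨ω, ω'⟩ := p
  simp only [pmfProd, PMF.bind_apply, PMF.map_apply]
  rw [tsum_eq_single ω]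
  · rw [tsum_eq_single ω']
    · simp
    · intro b hb; simp [Prod.ext_iff, hb.symm]
  · intro a ha
    rw [tsum_eq_single ω']
    · simp [Prod.ext_iff, ha.symm]
    · intro b hb; simp [Prod.ext_iff, hb.symm]

lemma summable_toReal_pmf {Ω : Type*} (P : PMF Ω) : Summable fun ω => (P ω).toReal :=
  ENNReal.summable_toReal (by simp [P.tsum_coe])

lemma tsum_toReal_pmf {Ω : Type*} (P : PMF Ω) : ∑' ω, (P ω).toReal = 1 := by
  rw [← ENNReal.tsum_toReal_eq fun a => P.apply_ne_top a, P.tsum_coe, ENNReal.toReal_one]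

lemma hsTerm_le {Ω : Type*} (α : ℝ) (hα : 0 ≤ α) (P Q : PMF Ω) (ω : Ω) :
    max ((P ω).toReal - α * (Q ω).toReal) 0 ≤ (P ω).toReal :=
  max_le (by nlinarith [ENNReal.toReal_nonneg (a := Q ω)]) ENNReal.toReal_nonneg

lemma summable_hsTerm {Ω : Type*} (α : ℝ) (hα : 0 ≤ α) (P Q : PMF Ω) :
    Summable fun ω => max ((P ω).toReal - α * (Q ω).toReal) 0 :=
  Summable.of_nonneg_of_le (fun _ => le_max_right _ _) (hsTerm_le α hα P Q)
    (summable_toReal_pmf P)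

lemma hsDiv_nonneg {Ω : Type*} (α : ℝ) (P Q : PMF Ω) : 0 ≤ hsDiv α P Q :=
  tsum_nonneg fun _ => le_max_right _ _

/-- Scaling identity: `∑ max(c·P − d·Q, 0) = c · hsDiv (d/c) P Q` for `c > 0`. -/
lemma hsDiv_scale {Ω : Type*} (P Q : PMF Ω) {c d : ℝ} (hc : 0 < c) :
    ∑' ω, max (c * (P ω).toReal - d * (Q ω).toReal) 0 = c * hsDiv (d / c) P Q := by
  unfold hsDiv
  rw [← tsum_mul_left]
  congr 1; funext ω
  rw [mul_max_of_nonneg _ _ hc.le, mul_zero]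
  congr 1
  field_simp

/-- hsDiv of products is symmetric in swapping coordinates. -/
lemma hsDiv_prod_comm {Ω Θ : Type*} (α : ℝ) (A B : PMF Ω) (X Y : PMF Θ) :
    hsDiv α (pmfProd A X) (pmfProd B Y) = hsDiv α (pmfProd X A) (pmfProd Y B) := by
  unfold hsDiv
  rw [← (Equiv.prodComm Θ Ω).tsum_eq]
  congr 1; funext p
  simp [pmfProd_apply, mul_comm]

/-- Summability of scaled hockey-stick terms. -/
lemma summable_scaled {Ω : Type*} (A B : PMF Ω) {c d : ℝ} (hc : 0 ≤ c) (hd : 0 ≤ d) :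
    Summable fun ω => max (c * (A ω).toReal - d * (B ω).toReal) 0 := by
  refine Summable.of_nonneg_of_le (fun _ => le_max_right _ _) (fun ω => ?_)
    ((summable_toReal_pmf A).mul_left c)
  apply max_le _ (by positivity)
  have : 0 ≤ d * (B ω).toReal := by positivity
  linarith

lemma tsum_scaled_le {Ω : Type*} (A B : PMF Ω) {c d : ℝ} (hc : 0 ≤ c) (hd : 0 ≤ d) :
    (∑' ω, max (c * (A ω).toReal - d * (B ω).toReal) 0) ≤ c := by
  calc (∑' ω, max (c * (A ω).toReal - d * (B ω).toReal) 0)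
      ≤ ∑' ω, c * (A ω).toReal := by
        apply Summable.tsum_le_tsum _ (summable_scaled A B hc hd) ((summable_toReal_pmf A).mul_left c)
        intro ω
        apply max_le _ (by positivity)
        have : 0 ≤ d * (B ω).toReal := by positivity
        linarith
    _ = c := by rw [tsum_mul_left, tsum_toReal_pmf, mul_one]

/-- Expansion of the hockey-stick divergence of a product as an iterated sum. -/
lemma hsDiv_prod_expand {Θ Ω : Type*} (X Y : PMF Θ) (A B : PMF Ω) {α : ℝ} (hα : 0 ≤ α) :
    hsDiv α (pmfProd X A) (pmfProd Y B)
      = ∑' θ, ∑' ω, max ((X θ).toReal * (A ω).toReal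
          - (α * (Y θ).toReal) * (B ω).toReal) 0 := by
  have hterm : ∀ (θ : Θ) (ω : Ω),
      max ((pmfProd X A (θ, ω)).toReal - α * (pmfProd Y B (θ, ω)).toReal) 0
        = max ((X θ).toReal * (A ω).toReal - (α * (Y θ).toReal) * (B ω).toReal) 0 := by
    intro θ ω
    simp only [pmfProd_apply, ENNReal.toReal_mul]
    ring_nf
  unfold hsDiv
  rw [Summable.tsum_prod' (summable_hsTerm α hα _ _) (fun θ => by
    simp only [hterm θ]
    exact summable_scaled A B ENNReal.toReal_nonneg (by positivity))]
  congr 1; funext θ; congr 1; funext ω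
  exact hterm θ ω

lemma outer_summable {Θ Ω : Type*} (X Y : PMF Θ) (A B : PMF Ω) {α : ℝ} (hα : 0 ≤ α) :
    Summable fun θ => ∑' ω, max ((X θ).toReal * (A ω).toReal
      - (α * (Y θ).toReal) * (B ω).toReal) 0 :=
  Summable.of_nonneg_of_le (fun θ => tsum_nonneg fun _ => le_max_right _ _)
    (fun θ => tsum_scaled_le A B ENNReal.toReal_nonneg (by positivity))
    (summable_toReal_pmf X)

/-- Key monotonicity lemma: replacing the second pair by a dominating pair. -/
lemma key_lemma {Θ Ω Γ : Type*} (X Y : PMF Θ) (A B : PMF Ω) (P Q : PMF Γ)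
    (hdom : ∀ α : ℝ, 0 ≤ α → hsDiv α A B ≤ hsDiv α P Q)
    (α : ℝ) (hα : 0 ≤ α) :
    hsDiv α (pmfProd X A) (pmfProd Y B) ≤ hsDiv α (pmfProd X P) (pmfProd Y Q) := by
  rw [hsDiv_prod_expand X Y A B hα, hsDiv_prod_expand X Y P Q hα]
  refine Summable.tsum_le_tsum (fun θ => ?_) (outer_summable X Y A B hα) (outer_summable X Y P Q hα)
  rcases eq_or_lt_of_le (ENNReal.toReal_nonneg (a := X θ)) with hc | hc
  · have h0 : ∀ ω : Ω, max ((X θ).toReal * (A ω).toReal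
        - (α * (Y θ).toReal) * (B ω).toReal) 0 = 0 := by
      intro ω
      rw [← hc, zero_mul, zero_sub, max_eq_right]
      have : 0 ≤ (α * (Y θ).toReal) * (B ω).toReal := by positivity
      linarith
    rw [tsum_congr h0, tsum_zero]
    exact tsum_nonneg fun _ => le_max_right _ _
  · rw [hsDiv_scale A B hc, hsDiv_scale P Q hc]
    exact mul_le_mul_of_nonneg_left (hdom _ (by positivity)) hc.le

/-- Domination of pairs of PMFs (in the hockey-stick divergence sense) is preserved
under taking products. -/
theorem domination_product {Ω Ω' Γ Γ' : Type*} [Countable Ω] [Countable Ω']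
    [Countable Γ] [Countable Γ']
    (A B : PMF Ω) (A' B' : PMF Ω') (P Q : PMF Γ) (P' Q' : PMF Γ')
    (hdom : ∀ α : ℝ, 0 ≤ α → hsDiv α A B ≤ hsDiv α P Q)
    (hdom' : ∀ α : ℝ, 0 ≤ α → hsDiv α A' B' ≤ hsDiv α P' Q') :
    ∀ α : ℝ, 0 ≤ α →
      hsDiv α (pmfProd A A') (pmfProd B B') ≤ hsDiv α (pmfProd P P') (pmfProd Q Q') := by
  intro α hα
  calc hsDiv α (pmfProd A A') (pmfProd B B')
      = hsDiv α (pmfProd A' A) (pmfProd B' B) := hsDiv_prod_comm α A B A' B'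
    _ ≤ hsDiv α (pmfProd A' P) (pmfProd B' Q) := key_lemma A' B' A B P Q hdom α hα
    _ = hsDiv α (pmfProd P A') (pmfProd Q B') := hsDiv_prod_comm α A' B' P Q
    _ ≤ hsDiv α (pmfProd P P') (pmfProd Q Q') := key_lemma P Q A' B' P' Q' hdom' α hα
end

section
/- Let P, Q be PMFs on a countable type Ω and P′, Q′ be PMFs on a countable type Ω′, where Q(ω) > 0 for all ω ∈ Ω and Q′(ω′) > 0 for all ω′ ∈ Ω′. Then the pushforward of the product PMF P ⊗ P′ under the map (ω, ω′) ↦ log((P(ω)·P′(ω′)) / (Q(ω)·Q′(ω′))) equals the pushforward under the addition map (x, y) ↦ x + y of the product of the two pushforward PMFs: (map of P under ω ↦ log(P(ω)/Q(ω))) ⊗ (map of P′ under ω′ ↦ log(P′(ω′)/Q′(ω′))). In other words, the privacy loss distribution of (P ⊗ P′, Q ⊗ Q′) is the convolution of the privacy loss distributions of (P, Q) and of (P′, Q′). -/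
/-- The privacy loss distribution of a pair `(P, Q)` of PMFs (with `Q` everywhere
positive): the pushforward of `P` under `ω ↦ log(P(ω)/Q(ω))`. -/
noncomputable def PLD {Ω : Type*} (P Q : PMF Ω) : PMF ℝ :=
  P.map fun ω => Real.log ((P ω).toReal / (Q ω).toReal)

lemma pmf_bind_congr {α β : Type*} (p : PMF α) (f g : α → PMF β)
    (h : ∀ a, p a ≠ 0 → f a = g a) : p.bind f = p.bind g := by
  ext b
  simp only [PMF.bind_apply]
  refine tsum_congr fun a => ?_
  by_cases ha : p a = 0
  · simp [ha]
  · rw [h a ha]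

/-- The privacy loss distribution of the product pair `(P ⊗ P', Q ⊗ Q')` is the
convolution of the privacy loss distributions of `(P, Q)` and `(P', Q')`. -/
theorem pld_product_eq_convolution {Ω Ω' : Type*} [Countable Ω] [Countable Ω']
    (P Q : PMF Ω) (P' Q' : PMF Ω')
    (hQ : ∀ ω, 0 < Q ω) (hQ' : ∀ ω', 0 < Q' ω') :
    PMF.map
        (fun p : Ω × Ω' =>
          Real.log (((P p.1).toReal * (P' p.2).toReal) /
            ((Q p.1).toReal * (Q' p.2).toReal)))
        (pmfProd P P')
      = PMF.map (fun xy : ℝ × ℝ => xy.1 + xy.2) (pmfProd (PLD P Q) (PLD P' Q')) := by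
  simp only [pmfProd, PLD, PMF.map, PMF.bind_bind, PMF.pure_bind, Function.comp]
  refine pmf_bind_congr _ _ _ fun ω hω => ?_
  refine pmf_bind_congr _ _ _ fun ω' hω' => ?_
  congr 1
  have hP : (P ω).toReal ≠ 0 := ENNReal.toReal_ne_zero.2 ⟨hω, P.apply_ne_top ω⟩
  have hP' : (P' ω').toReal ≠ 0 := ENNReal.toReal_ne_zero.2 ⟨hω', P'.apply_ne_top ω'⟩
  have hQ1 : (Q ω).toReal ≠ 0 := ENNReal.toReal_ne_zero.2 ⟨(hQ ω).ne', Q.apply_ne_top ω⟩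
  have hQ2 : (Q' ω').toReal ≠ 0 := ENNReal.toReal_ne_zero.2 ⟨(hQ' ω').ne', Q'.apply_ne_top ω'⟩
  rw [Real.log_div (mul_ne_zero hP hP') (mul_ne_zero hQ1 hQ2),
    Real.log_mul hP hP', Real.log_mul hQ1 hQ2,
    Real.log_div hP hQ1, Real.log_div hP' hQ2]
  ring
end

section
/- Fix an integer k ≥ 2 and real numbers 0 = a_0 < a_1 < ⋯ < a_{k−1}. Let h_0, h_1, …, h_k be real numbers satisfying: h_0 = 1; h_{i+1} ≤ h_i for all 0 ≤ i ≤ k−1; h_k ≥ 0; h_{k−1} = h_k; h_i ≥ max(1 − a_i, 0) for all 0 ≤ i ≤ k−1; and the convexity condition (h_{i−1} − h_i)/(a_i − a_{i−1}) ≥ (h_i − h_{i+1})/(a_{i+1} − a_i) for all 1 ≤ i ≤ k−2. Define Q_i := (h_{i−1} − h_i)/(a_i − a_{i−1}) − (h_i − h_{i+1})/(a_{i+1} − a_i) for 1 ≤ i ≤ k−2, Q_{k−1} := (h_{k−2} − h_{k−1})/(a_{k−1} − a_{k−2}), Q_k := 0, and Q_0 := 1 − ∑_{i=1}^{k−1}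 Q_i; define P_0 := 0, P_i := a_i·Q_i for 1 ≤ i ≤ k−1, and P_k := h_k. Then: Q_i ≥ 0 for all 0 ≤ i ≤ k, ∑_{i=0}^{k} Q_i = 1, P_i ≥ 0 for all 0 ≤ i ≤ k, and ∑_{i=0}^{k} P_i = 1; that is, (P_i) and (Q_i) are probability vectors. -/
/-- Correctness of the DiscretizePLD algorithm: given the values `h 0, …, h k` of a
hockey-stick curve at discretization points `0 = a 0 < a 1 < ⋯ < a (k-1)` (with index
`k` playing the role of `+∞`), the vectors `P` and `Q` it constructs are probability
vectors. -/
theorem discretizePLD_prob_vectors {k : ℕ} (hk : 2 ≤ k)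
    (a : ℕ → ℝ) (ha0 : a 0 = 0) (hamono : ∀ i, i < k - 1 → a i < a (i + 1))
    (h : ℕ → ℝ) (hh0 : h 0 = 1)
    (hmono : ∀ i, i ≤ k - 1 → h (i + 1) ≤ h i)
    (hhk : 0 ≤ h k) (hlast : h (k - 1) = h k)
    (hlb : ∀ i, i ≤ k - 1 → max (1 - a i) 0 ≤ h i)
    (hconv : ∀ i, 1 ≤ i → i ≤ k - 2 →
      (h i - h (i + 1)) / (a (i + 1) - a i) ≤ (h (i - 1) - h i) / (a i - a (i - 1)))
    (Q P : ℕ → ℝ)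
    (hQmid : ∀ i, 1 ≤ i → i ≤ k - 2 →
      Q i = (h (i - 1) - h i) / (a i - a (i - 1)) - (h i - h (i + 1)) / (a (i + 1) - a i))
    (hQlast : Q (k - 1) = (h (k - 2) - h (k - 1)) / (a (k - 1) - a (k - 2)))
    (hQk : Q k = 0)
    (hQ0 : Q 0 = 1 - ∑ i ∈ Finset.Icc 1 (k - 1), Q i)
    (hP0 : P 0 = 0)
    (hPmid : ∀ i, 1 ≤ i → i ≤ k - 1 → P i = a i * Q i)
    (hPk : P k = h k) :
    (∀ i, i ≤ k → 0 ≤ Q i) ∧ (∑ i ∈ Finset.range (k + 1), Q i = 1) ∧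
    (∀ i, i ≤ k → 0 ≤ P i) ∧ (∑ i ∈ Finset.range (k + 1), P i = 1) := by
  obtain ⟨n, rfl⟩ : ∃ n, k = n + 2 := ⟨k - 2, by omega⟩
  -- normalize the natural subtractions
  have e1 : n + 2 - 1 = n + 1 := rfl
  have e2 : n + 2 - 2 = n := rfl
  rw [e1] at hamono hmono hlast hlb hQlast hQ0 hPmid
  rw [e2] at hQlast
  -- slopes
  set s : ℕ → ℝ := fun i => (h i - h (i + 1)) / (a (i + 1) - a i) with hs
  have hQmid' : ∀ i < n, Q (i + 1) = s i - s (i + 1) := by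
    intro i hi
    have := hQmid (i + 1) (by omega) (by omega)
    simpa using this
  have hQlast' : Q (n + 1) = s n := hQlast
  have apos : 0 < a 1 := by
    have := hamono 0 (by omega); rwa [ha0] at this
  have anneg : ∀ i ≤ n + 1, 0 ≤ a i := by
    intro i hi
    induction i with
    | zero => rw [ha0]
    | succ j ih =>
      have := hamono j (by omega)
      have := ih (by omega)
      linarith
  -- telescoping of Q
  have reidx : ∑ i ∈ Finset.Icc 1 (n + 1), Q i = ∑ i ∈ Finset.range (n + 1), Q (i + 1) := by
    rw [← Finset.Ico_add_one_right_eq_Icc, Finset.sum_Ico_eq_sum_range]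
    simp [add_comm]
  have sumIccQ : ∑ i ∈ Finset.Icc 1 (n + 1), Q i = s 0 := by
    rw [reidx, Finset.sum_range_succ, hQlast']
    have : ∑ i ∈ Finset.range n, Q (i + 1) = ∑ i ∈ Finset.range n, (s i - s (i + 1)) :=
      Finset.sum_congr rfl fun i hi => hQmid' i (Finset.mem_range.mp hi)
    rw [this, Finset.sum_range_sub' s]
    ring
  have hs0 : s 0 = (1 - h 1) / a 1 := by
    simp only [hs, ha0, hh0, sub_zero]
  have s0le : s 0 ≤ 1 := by
    rw [hs0, div_le_one apos]
    have := le_trans (le_max_left (1 - a 1) 0) (hlb 1 (by omega))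
    linarith
  have snn : 0 ≤ s n := by
    have hnum := hmono n (by omega)
    have hden := hamono n (by omega)
    exact div_nonneg (by linarith) (by linarith)
  have Qnn : ∀ i, i ≤ n + 2 → 0 ≤ Q i := by
    intro i hi
    rcases Nat.eq_zero_or_pos i with rfl | hi1
    · rw [hQ0, sumIccQ]; linarith
    rcases eq_or_lt_of_le hi with rfl | hi2
    · rw [hQk]
    rcases eq_or_lt_of_le (show i ≤ n + 1 by omega) with rfl | hi3
    · rw [hQlast']; exact snn
    · have h1 : 1 ≤ i := hi1
      have h2 : i ≤ n := by omega
      rw [hQmid i h1 h2]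
      exact sub_nonneg.mpr (hconv i h1 h2)
  have sumQ : ∑ i ∈ Finset.range (n + 2 + 1), Q i = 1 := by
    rw [Finset.sum_range_succ, hQk, add_zero, Finset.sum_range_succ', hQ0, sumIccQ, ← reidx,
      sumIccQ]
    ring
  have Pnn : ∀ i, i ≤ n + 2 → 0 ≤ P i := by
    intro i hi
    rcases Nat.eq_zero_or_pos i with rfl | hi1
    · rw [hP0]
    rcases eq_or_lt_of_le hi with rfl | hi2
    · rw [hPk]; exact hhk
    · rw [hPmid i hi1 (by omega)]
      exact mul_nonneg (anneg i (by omega)) (Qnn i (by omega))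
  refine ⟨Qnn, sumQ, Pnn, ?_⟩
  -- the sum of P
  have key : ∀ i < n, P (i + 1) =
      (a (i + 1) * s i - a (i + 2) * s (i + 1)) + (h (i + 1) - h (i + 2)) := by
    intro i hi
    rw [hPmid (i + 1) (by omega) (by omega), hQmid' i hi]
    have hd : a (i + 2) - a (i + 1) ≠ 0 :=
      ne_of_gt (sub_pos.mpr (hamono (i + 1) (by omega)))
    have hh : s (i + 1) * (a (i + 2) - a (i + 1)) = h (i + 1) - h (i + 2) := by
      rw [hs]; exact div_mul_cancel₀ _ hd
    linear_combination hh
  have sumtel : ∑ i ∈ Finset.range n, P (i + 1) =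
      (a 1 * s 0 - a (n + 1) * s n) + (h 1 - h (n + 1)) := by
    have := Finset.sum_congr rfl fun i hi => key i (Finset.mem_range.mp hi)
    rw [this, Finset.sum_add_distrib,
      Finset.sum_range_sub' (fun i => a (i + 1) * s i),
      Finset.sum_range_sub' (fun i => h (i + 1))]
  have a1s0 : a 1 * s 0 = 1 - h 1 := by
    rw [hs0, mul_div_cancel₀ _ (ne_of_gt apos)]
  have sumP1 : ∑ i ∈ Finset.range (n + 1), P (i + 1) = 1 - h (n + 1) := by
    rw [Finset.sum_range_succ, sumtel, hPmid (n + 1) (by omega) (by omega), hQlast', a1s0]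
    ring
  rw [Finset.sum_range_succ, hPk, Finset.sum_range_succ', hP0, sumP1, ← hlast]
  ring
end

section
/- Fix an integer k ≥ 2 and real numbers 0 = a_0 < a_1 < ⋯ < a_{k−1}. Let h_0, …, h_k be real numbers satisfying: h_0 = 1; h_{i+1} ≤ h_i for all 0 ≤ i ≤ k−1; h_k ≥ 0; h_{k−1} = h_k; h_i ≥ max(1 − a_i, 0) for all 0 ≤ i ≤ k−1; and (h_{i−1} − h_i)/(a_i − a_{i−1}) ≥ (h_i − h_{i+1})/(a_{i+1} − a_i) for all 1 ≤ i ≤ k−2. Define Q_i, P_i (0 ≤ i ≤ k) as: Q_i := (h_{i−1} − h_i)/(a_i − a_{i−1}) − (h_i − h_{i+1})/(a_{i+1} − a_i) for 1 ≤ i ≤ k−2, Q_{k−1} := (h_{k−2} − h_{k−1})/(a_{k−1} − a_{k−2}), Q_k := 0, Q_0 := 1 − ∑_{i=1}^{k−1} Q_i; P_0 := 0, P_i := a_i·Q_i for 1 ≤ i ≤ k−1, P_k := h_k. Then for every 1 ≤ i ≤ k−1 and every real α with a_{i−1} ≤ α ≤ a_i: ∑_{j=0}^{k−1} max(P_j −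 α·Q_j, 0) + P_k = ((a_i − α)·h_{i−1} + (α − a_{i−1})·h_i)/(a_i − a_{i−1}); and for every real α ≥ a_{k−1}: ∑_{j=0}^{k−1} max(P_j − α·Q_j, 0) + P_k = h_k. -/
/-- Divergence-correctness of the DiscretizePLD algorithm: the pair of finitely
supported distributions `(P, Q)` it constructs has hockey-stick divergence
`∑_{j<k} [P j - α·Q j]₊ + P k` equal to the piecewise-linear interpolation of the
input values `h 0, …, h (k-1)` on the grid, and equal to `h k` beyond the last finite
grid point. -/
theorem discretizePLD_divergence {k : ℕ} (hk : 2 ≤ k)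
    (a : ℕ → ℝ) (ha0 : a 0 = 0) (hamono : ∀ i, i < k - 1 → a i < a (i + 1))
    (h : ℕ → ℝ) (hh0 : h 0 = 1)
    (hmono : ∀ i, i ≤ k - 1 → h (i + 1) ≤ h i)
    (hhk : 0 ≤ h k) (hlast : h (k - 1) = h k)
    (hlb : ∀ i, i ≤ k - 1 → max (1 - a i) 0 ≤ h i)
    (hconv : ∀ i, 1 ≤ i → i ≤ k - 2 →
      (h i - h (i + 1)) / (a (i + 1) - a i) ≤ (h (i - 1) - h i) / (a i - a (i - 1)))
    (Q P : ℕ → ℝ)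
    (hQmid : ∀ i, 1 ≤ i → i ≤ k - 2 →
      Q i = (h (i - 1) - h i) / (a i - a (i - 1)) - (h i - h (i + 1)) / (a (i + 1) - a i))
    (hQlast : Q (k - 1) = (h (k - 2) - h (k - 1)) / (a (k - 1) - a (k - 2)))
    (hQk : Q k = 0)
    (hQ0 : Q 0 = 1 - ∑ i ∈ Finset.Icc 1 (k - 1), Q i)
    (hP0 : P 0 = 0)
    (hPmid : ∀ i, 1 ≤ i → i ≤ k - 1 → P i = a i * Q i)
    (hPk : P k = h k) :
    (∀ i, 1 ≤ i → i ≤ k - 1 → ∀ α : ℝ, a (i - 1) ≤ α → α ≤ a i →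
      (∑ j ∈ Finset.range k, max (P j - α * Q j) 0) + P k
        = ((a i - α) * h (i - 1) + (α - a (i - 1)) * h i) / (a i - a (i - 1))) ∧
    (∀ α : ℝ, a (k - 1) ≤ α →
      (∑ j ∈ Finset.range k, max (P j - α * Q j) 0) + P k = h k) := by
  have hk1 : 1 ≤ k - 1 := by omega
  set s : ℕ → ℝ := fun j => if j ≤ k - 1 then (h (j - 1) - h j) / (a j - a (j - 1)) else 0
    with hs
  have hsk : s k = 0 := by
    simp only [hs]
    rw [if_neg (by omega)]
  have hsval : ∀ j, 1 ≤ j → j ≤ k - 1 → s j = (h (j - 1) - h j) / (a j - a (j - 1)) := by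
    intro j h1 h2
    simp only [hs]
    rw [if_pos h2]
  have amono' : ∀ i j : ℕ, i ≤ j → j ≤ k - 1 → a i ≤ a j := by
    intro i j hij hjk
    induction j with
    | zero =>
      have : i = 0 := by omega
      rw [this]
    | succ n ih =>
      rcases Nat.eq_or_lt_of_le hij with he | hl
      · rw [he]
      · exact le_trans (ih (by omega) (by omega)) (le_of_lt (hamono n (by omega)))
  have hQs : ∀ j, 1 ≤ j → j ≤ k - 1 → Q j = s j - s (j + 1) := by
    intro j h1 h2
    rcases eq_or_lt_of_le h2 with he | hl
    · have e1 : j + 1 = k := by omega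
      have e2 : k - 1 - 1 = k - 2 := by omega
      rw [e1, hsk, he, hQlast, hsval (k - 1) (by omega) (by omega), e2]
      ring
    · have e0 : j + 1 - 1 = j := by omega
      rw [hQmid j h1 (by omega), hsval j h1 h2, hsval (j + 1) (by omega) (by omega), e0]
  have hQnn : ∀ j, 1 ≤ j → j ≤ k - 1 → 0 ≤ Q j := by
    intro j h1 h2
    rcases eq_or_lt_of_le h2 with he | hl
    · rw [he, hQlast]
      have e : k - 2 + 1 = k - 1 := by omega
      have hm := hmono (k - 2) (by omega)
      have ha := hamono (k - 2) (by omega)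
      rw [e] at hm ha
      exact div_nonneg (by linarith) (by linarith)
    · rw [hQmid j h1 (by omega)]
      have := hconv j h1 (by omega)
      linarith
  have htel : ∀ (f : ℕ → ℝ) (p q : ℕ), p ≤ q →
      ∑ j ∈ Finset.Ico p q, (f j - f (j + 1)) = f p - f q := by
    intro f p q hpq
    rw [Finset.sum_Ico_eq_sub _ hpq, Finset.sum_range_sub' f, Finset.sum_range_sub' f]
    ring
  have hQsum : ∑ i ∈ Finset.Icc 1 (k - 1), Q i = s 1 := by
    have hIc : Finset.Icc 1 (k - 1) = Finset.Ico 1 k := by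
      ext x
      simp only [Finset.mem_Icc, Finset.mem_Ico]
      omega
    rw [hIc, Finset.sum_congr rfl (fun j hj => by
      obtain ⟨h1, h2⟩ := Finset.mem_Ico.1 hj
      exact hQs j h1 (by omega)), htel s 1 k (by omega), hsk]
    ring
  have ha1 : 0 < a 1 := by
    have := hamono 0 (by omega)
    rwa [ha0] at this
  have hs1le : s 1 ≤ 1 := by
    have e : (1 : ℕ) - 1 = 0 := rfl
    rw [hsval 1 le_rfl hk1, e, ha0, hh0, sub_zero, div_le_one ha1]
    have h1 := hlb 1 hk1
    have h2 := le_max_left (1 - a 1) (0 : ℝ)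
    linarith
  have hQ0nn : 0 ≤ Q 0 := by
    rw [hQ0, hQsum]; linarith
  -- key lemma
  have key : ∀ (α : ℝ), 0 ≤ α → ∀ i, 1 ≤ i → i ≤ k →
      (∀ j, 1 ≤ j → j < i → a j ≤ α) → (∀ j, i ≤ j → j ≤ k - 1 → α ≤ a j) →
      ∑ j ∈ Finset.range k, max (P j - α * Q j) 0
        = ((a i - α) * s i + h i) - h k := by
    intro α hα i h1 hik hbelow habove
    rw [Finset.range_eq_Ico, ← Finset.sum_Ico_consecutive _ (Nat.zero_le i) hik]
    have hpart1 : ∑ j ∈ Finset.Ico 0 i, max (P j - α * Q j) 0 = 0 := by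
      apply Finset.sum_eq_zero
      intro j hj
      rcases Nat.eq_zero_or_pos j with h0 | hpos
      · subst h0
        rw [hP0]
        have := mul_nonneg hα hQ0nn
        exact max_eq_right (by linarith)
      · obtain ⟨_, hjlt⟩ := Finset.mem_Ico.1 hj
        have hjk1 : j ≤ k - 1 := by omega
        rw [hPmid j hpos hjk1]
        have haj := hbelow j hpos hjlt
        have hq := hQnn j hpos hjk1
        exact max_eq_right (by nlinarith)
    have hpart2 : ∀ j ∈ Finset.Ico i k, max (P j - α * Q j) 0
        = ((a j - α) * s j + h j) - ((a (j + 1) - α) * s (j + 1) + h (j + 1)) := by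
      intro j hj
      obtain ⟨hij, hjk⟩ := Finset.mem_Ico.1 hj
      have h1j : 1 ≤ j := le_trans h1 hij
      have hjk1 : j ≤ k - 1 := by omega
      have hαj := habove j hij hjk1
      have hq := hQnn j h1j hjk1
      rw [hPmid j h1j hjk1]
      have hmax : max (a j * Q j - α * Q j) 0 = (a j - α) * Q j := by
        rw [max_eq_left (by nlinarith)]; ring
      rw [hmax, hQs j h1j hjk1]
      rcases eq_or_lt_of_le hjk1 with he | hl
      · have e : j + 1 = k := by omega
        rw [e, hsk, he, hlast]
        ring
      · have e0 : j + 1 - 1 = j := by omega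
        have hsj1 : s (j + 1) = (h j - h (j + 1)) / (a (j + 1) - a j) := by
          rw [hsval (j + 1) (by omega) (by omega), e0]
        have hd : a (j + 1) - a j ≠ 0 := by
          have := hamono j (by omega)
          linarith
        rw [hsj1]
        field_simp
        ring
    rw [Finset.sum_congr rfl hpart2, hpart1, zero_add, htel _ i k hik, hsk]
    ring
  constructor
  · intro i h1 hik1 α hα1 hα2
    have e : i - 1 + 1 = i := by omega
    have hΔ : 0 < a i - a (i - 1) := by
      have := hamono (i - 1) (by omega)
      rw [e] at this
      linarith
    have h0α : 0 ≤ α := by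
      have := amono' 0 (i - 1) (by omega) (by omega)
      rw [ha0] at this
      linarith
    rw [key α h0α i h1 (by omega)
      (fun j hj1 hji => le_trans (amono' j (i - 1) (by omega) (by omega)) hα1)
      (fun j hij hjk => le_trans hα2 (amono' i j hij hjk)), hPk,
      hsval i h1 hik1]
    field_simp
    ring
  · intro α hα
    have h0α : 0 ≤ α := by
      have := amono' 0 (k - 1) (by omega) le_rfl
      rw [ha0] at this
      linarith
    rw [key α h0α k (by omega) le_rfl
      (fun j hj1 hjk => le_trans (amono' j (k - 1) (by omega) le_rfl) hα)
      (fun j hkj hjk => by omega), hPk, hsk]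
    ring
end

section
/- Fix an integer k ≥ 2 and real numbers 0 = a_0 < a_1 < ⋯ < a_{k−1}. Let P, Q be PMFs on a countable type Ω such that for every ω with P(ω) > 0, either Q(ω) = 0 or there exists i ∈ {1, …, k−1} with P(ω) = a_i·Q(ω). Then for every i ∈ {1, …, k−1} and every real α with a_{i−1} ≤ α ≤ a_i: D_α(P‖Q) = ((a_i − α)·D_{a_{i−1}}(P‖Q) + (α − a_{i−1})·D_{a_i}(P‖Q))/(a_i − a_{i−1}); that is, the hockey-stick curve of (P, Q) is affine on each interval [a_{i−1}, a_i]. -/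
/-- If the privacy loss distribution of `(P, Q)` is supported on the grid
`{a 1, …, a (k-1)} ∪ {+∞}`, then the hockey-stick curve of `(P, Q)` is affine on each
grid interval `[a (i-1), a i]`. -/
theorem hockey_stick_affine_on_grid {Ω : Type*} [Countable Ω] {k : ℕ} (hk : 2 ≤ k)
    (a : ℕ → ℝ) (ha0 : a 0 = 0) (hamono : ∀ i, i < k - 1 → a i < a (i + 1))
    (P Q : PMF Ω)
    (hsupp : ∀ ω, 0 < P ω →
      Q ω = 0 ∨ ∃ i, 1 ≤ i ∧ i ≤ k - 1 ∧ (P ω).toReal = a i * (Q ω).toReal)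
    (i : ℕ) (hi1 : 1 ≤ i) (hik : i ≤ k - 1)
    (α : ℝ) (hα1 : a (i - 1) ≤ α) (hα2 : α ≤ a i) :
    hsDiv α P Q
      = ((a i - α) * hsDiv (a (i - 1)) P Q + (α - a (i - 1)) * hsDiv (a i) P Q)
          / (a i - a (i - 1)) := by
  -- monotonicity of the grid
  have amono : ∀ m n : ℕ, m ≤ n → n ≤ k - 1 → a m ≤ a n := by
    intro m n hmn hn
    induction n with
    | zero => simp_all
    | succ n ih =>
      rcases Nat.lt_or_ge m (n+1) with h | h
      · have h1 : m ≤ n := Nat.lt_succ_iff.mp h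
        have h2 : n ≤ k - 1 := le_trans (Nat.le_succ n) hn
        exact le_trans (ih h1 h2) (le_of_lt (hamono n (Nat.lt_of_lt_of_le (Nat.lt_succ_self n) hn)))
      · have : m = n+1 := le_antisymm hmn h
        simp [this]
  have hi1k : i - 1 ≤ k - 1 := le_trans (Nat.sub_le i 1) hik
  have hβγ : a (i - 1) < a i := by
    have h := hamono (i-1) (by omega)
    rwa [Nat.sub_add_cancel hi1] at h
  have hβ0 : 0 ≤ a (i - 1) := ha0 ▸ amono 0 (i-1) (Nat.zero_le _) hi1k
  have hγ0 : 0 ≤ a i := le_trans hβ0 hβγ.le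
  have hα0 : 0 ≤ α := le_trans hβ0 hα1
  set β := a (i - 1) with hβ
  set γ := a i with hγ
  -- pointwise affine identity
  have key : ∀ ω, (γ - β) * max ((P ω).toReal - α * (Q ω).toReal) 0
      = (γ - α) * max ((P ω).toReal - β * (Q ω).toReal) 0
      + (α - β) * max ((P ω).toReal - γ * (Q ω).toReal) 0 := by
    intro ω
    set p := (P ω).toReal with hp
    set q := (Q ω).toReal with hq
    have hq0 : 0 ≤ q := ENNReal.toReal_nonneg
    rcases eq_or_lt_of_le (show (0:ENNReal) ≤ P ω from zero_le) with hP | hP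
    · have hp0 : p = 0 := by simp [hp, ← hP]
      have hz : ∀ c : ℝ, 0 ≤ c → max (p - c * q) 0 = 0 := by
        intro c hc
        have : p - c * q ≤ 0 := by
          rw [hp0]; simpa using mul_nonneg hc hq0
        simp [max_eq_right this]
      rw [hz α hα0, hz β hβ0, hz γ hγ0]; ring
    · rcases hsupp ω hP with hQ0 | ⟨j, hj1, hjk, hpj⟩
      · have hq0' : q = 0 := by simp [hq, hQ0]
        have hp0 : 0 ≤ p := ENNReal.toReal_nonneg
        simp only [hq0', mul_zero, sub_zero, max_eq_left hp0]; ring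
      · rcases Nat.lt_or_ge j i with hji | hji
        · -- j ≤ i - 1, so a j ≤ β; all maxes vanish
          have hajβ : a j ≤ β := amono j (i-1) (by omega) hi1k
          have hz : ∀ c : ℝ, a j ≤ c → max (p - c * q) 0 = 0 := by
            intro c hc
            have : p - c * q ≤ 0 := by
              rw [hp, hq, hpj]
              have := mul_le_mul_of_nonneg_right hc hq0
              linarith
            simp [max_eq_right this]
          rw [hz α (le_trans hajβ hα1), hz β hajβ, hz γ (le_trans hajβ (le_trans hα1 hα2))]
          ring
        · -- j ≥ i, so a j ≥ γ; maxes are linear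
          have hγaj : γ ≤ a j := amono i j hji hjk
          have hm : ∀ c : ℝ, c ≤ a j → max (p - c * q) 0 = (a j - c) * q := by
            intro c hc
            have h1 : 0 ≤ p - c * q := by
              rw [hp, hq, hpj]
              have := mul_le_mul_of_nonneg_right hc hq0
              linarith
            rw [max_eq_left h1, hp, hq, hpj]; ring
          rw [hm α (le_trans hα2 hγaj), hm β (le_trans (le_trans hα1 hα2) hγaj), hm γ hγaj]
          ring
  -- summability
  have hPsum : Summable (fun ω => (P ω).toReal) :=
    ENNReal.summable_toReal (by rw [P.tsum_coe]; exact ENNReal.one_ne_top)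
  have hsum : ∀ c : ℝ, 0 ≤ c → Summable (fun ω => max ((P ω).toReal - c * (Q ω).toReal) 0) := by
    intro c hc
    apply Summable.of_nonneg_of_le (fun ω => le_max_right _ _) _ hPsum
    intro ω
    have : (P ω).toReal - c * (Q ω).toReal ≤ (P ω).toReal := by
      have := mul_nonneg hc (ENNReal.toReal_nonneg (a := Q ω))
      linarith
    exact max_le this ENNReal.toReal_nonneg
  have hmain : (γ - β) * hsDiv α P Q = (γ - α) * hsDiv β P Q + (α - β) * hsDiv γ P Q := by
    unfold hsDiv
    rw [← tsum_mul_left, ← tsum_mul_left, ← tsum_mul_left,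
      ← Summable.tsum_add ((hsum β hβ0).mul_left _) ((hsum γ hγ0).mul_left _)]
    exact tsum_congr key
  have hne : γ - β ≠ 0 := by linarith
  field_simp
  linarith [hmain]
end

section
/- Fix an integer k ≥ 2 and real numbers 0 = a_0 < a_1 < ⋯ < a_{k−1}. Let A, B be PMFs on a countable type Γ, and let P, Q be PMFs on a countable type Ω such that: (a) for every ω with P(ω) > 0, either Q(ω) = 0 or there exists i ∈ {1, …, k−1} with P(ω) = a_i·Q(ω); and (b) D_α(A‖B) ≤ D_α(P‖Q) for all real α ≥ 0. Then: for every i ∈ {1, …, k−1} and every real α with a_{i−1} ≤ α ≤ a_i, ((a_i − α)·D_{a_{i−1}}(A‖B) + (α − a_{i−1})·D_{a_i}(A‖B))/(a_i − a_{i−1}) ≤ D_α(P‖Q); and for every real α ≥ a_{k−1}, ∑_{γ : B(γ) = 0} A(γ) ≤ D_α(P‖Q). That is, any pessimistic estimate with privacy loss distribution supported on the grid dominates the 'connect-the-dots' piecewise-linear interpolation of the hockey-stick curve of (A, B). -/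
private lemma summable_hs {Ω : Type*} {α : ℝ} (hα : 0 ≤ α) (P Q : PMF Ω) :
    Summable fun ω => max ((P ω).toReal - α * (Q ω).toReal) 0 := by
  have hP : Summable fun ω => (P ω).toReal :=
    ENNReal.summable_toReal (by simp [P.tsum_coe])
  refine hP.of_nonneg_of_le (fun ω => le_max_right _ _) (fun ω => ?_)
  have h1 : 0 ≤ α * (Q ω).toReal := mul_nonneg hα ENNReal.toReal_nonneg
  have h2 : 0 ≤ (P ω).toReal := ENNReal.toReal_nonneg
  rw [max_le_iff]
  constructor <;> linarith

/-- Optimality of the connect-the-dots pessimistic estimate: any pair `(P, Q)` whose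
privacy loss distribution is supported on the grid `{a 1, …, a (k-1)} ∪ {+∞}` and
which dominates `(A, B)` must dominate the piecewise-linear interpolation of the
hockey-stick curve of `(A, B)` on the grid. -/
theorem pessimistic_estimate_is_best {Γ Ω : Type*} [Countable Γ] [Countable Ω]
    {k : ℕ} (hk : 2 ≤ k)
    (a : ℕ → ℝ) (ha0 : a 0 = 0) (hamono : ∀ i, i < k - 1 → a i < a (i + 1))
    (A B : PMF Γ) (P Q : PMF Ω)
    (hsupp : ∀ ω, 0 < P ω →
      Q ω = 0 ∨ ∃ i, 1 ≤ i ∧ i ≤ k - 1 ∧ (P ω).toReal = a i * (Q ω).toReal)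
    (hdom : ∀ α : ℝ, 0 ≤ α → hsDiv α A B ≤ hsDiv α P Q) :
    (∀ i, 1 ≤ i → i ≤ k - 1 → ∀ α : ℝ, a (i - 1) ≤ α → α ≤ a i →
      ((a i - α) * hsDiv (a (i - 1)) A B + (α - a (i - 1)) * hsDiv (a i) A B)
          / (a i - a (i - 1)) ≤ hsDiv α P Q) ∧
    (∀ α : ℝ, a (k - 1) ≤ α →
      (∑' γ : {γ : Γ // B γ = 0}, (A γ.1).toReal) ≤ hsDiv α P Q) := by
  have amono : ∀ n, n ≤ k - 1 → ∀ m, m ≤ n → a m ≤ a n := by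
    intro n
    induction n with
    | zero => intro _ m hm; rw [Nat.le_zero.mp hm]
    | succ n ih =>
      intro hn m hm
      rcases Nat.eq_or_lt_of_le hm with h | h
      · rw [h]
      · have h1 : a m ≤ a n := ih (by omega) m (by omega)
        have h2 : a n < a (n + 1) := hamono n (by omega)
        linarith
  have anonneg : ∀ n, n ≤ k - 1 → 0 ≤ a n := by
    intro n hn
    have := amono n hn 0 (Nat.zero_le n)
    rwa [ha0] at this
  constructor
  · intro i hi1 hik α hα1 hα2
    have hii : i - 1 + 1 = i := Nat.sub_add_cancel hi1
    have hlt : a (i - 1) < a i := by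
      have := hamono (i - 1) (by omega)
      rwa [hii] at this
    have hdpos : 0 < a i - a (i - 1) := by linarith
    have hdne : a i - a (i - 1) ≠ 0 := ne_of_gt hdpos
    have hai0 : 0 ≤ a (i - 1) := anonneg _ (by omega)
    have hai : 0 ≤ a i := anonneg _ hik
    have hα0 : 0 ≤ α := le_trans hai0 hα1
    have key : ∀ ω, max ((P ω).toReal - α * (Q ω).toReal) 0
        = (a i - α) / (a i - a (i - 1)) * max ((P ω).toReal - a (i - 1) * (Q ω).toReal) 0
          + (α - a (i - 1)) / (a i - a (i - 1)) * max ((P ω).toReal - a i * (Q ω).toReal) 0 := by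
      intro ω
      have hq0 : 0 ≤ (Q ω).toReal := ENNReal.toReal_nonneg
      by_cases hp : 0 < P ω
      · rcases hsupp ω hp with hq | ⟨j, hj1, hjk, hpq⟩
        · rw [hq]
          simp only [ENNReal.toReal_zero, mul_zero, sub_zero]
          rw [max_eq_left ENNReal.toReal_nonneg]
          field_simp
          ring
        · rw [hpq]
          by_cases hij : i ≤ j
          · have haj : a i ≤ a j := amono j hjk i hij
            have haj' : a (i - 1) ≤ a j := by linarith
            rw [max_eq_left (by nlinarith), max_eq_left (by nlinarith),
              max_eq_left (by nlinarith)]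
            field_simp
            ring
          · have hji : j ≤ i - 1 := by omega
            have haj : a j ≤ a (i - 1) := amono (i - 1) (by omega) j hji
            rw [max_eq_right (by nlinarith), max_eq_right (by nlinarith),
              max_eq_right (by nlinarith)]
            ring
      · have hp0 : (P ω).toReal = 0 := by
          have : P ω = 0 := by
            by_contra h
            exact hp (pos_iff_ne_zero.mpr h)
          simp [this]
        rw [hp0]
        rw [max_eq_right (by nlinarith), max_eq_right (by nlinarith),
          max_eq_right (by nlinarith)]
        ring
    have hsum1 := summable_hs hai0 P Q
    have hsum2 := summable_hs hai P Q
    have heq : hsDiv α P Q = (a i - α) / (a i - a (i - 1)) * hsDiv (a (i - 1)) P Q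
        + (α - a (i - 1)) / (a i - a (i - 1)) * hsDiv (a i) P Q := by
      unfold hsDiv
      rw [tsum_congr key, Summable.tsum_add (hsum1.mul_left _) (hsum2.mul_left _),
        tsum_mul_left, tsum_mul_left]
    rw [heq]
    have h1 := hdom (a (i - 1)) hai0
    have h2 := hdom (a i) hai
    have c1 : 0 ≤ (a i - α) / (a i - a (i - 1)) := div_nonneg (by linarith) hdpos.le
    have c2 : 0 ≤ (α - a (i - 1)) / (a i - a (i - 1)) := div_nonneg (by linarith) hdpos.le
    have hre : ((a i - α) * hsDiv (a (i - 1)) A B + (α - a (i - 1)) * hsDiv (a i) A B)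
          / (a i - a (i - 1))
        = (a i - α) / (a i - a (i - 1)) * hsDiv (a (i - 1)) A B
          + (α - a (i - 1)) / (a i - a (i - 1)) * hsDiv (a i) A B := by ring
    rw [hre]
    exact add_le_add (mul_le_mul_of_nonneg_left h1 c1) (mul_le_mul_of_nonneg_left h2 c2)
  · intro α hα
    have hα0 : 0 ≤ α := le_trans (anonneg _ le_rfl) hα
    refine le_trans ?_ (hdom α hα0)
    unfold hsDiv
    have hA : Summable fun γ => (A γ).toReal :=
      ENNReal.summable_toReal (by simp [A.tsum_coe])
    have hind : Summable ({γ : Γ | B γ = 0}.indicator fun γ => (A γ).toReal) :=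
      hA.indicator _
    have hsub : (∑' γ : {γ : Γ // B γ = 0}, (A γ.1).toReal)
        = ∑' γ, ({γ : Γ | B γ = 0}.indicator fun γ => (A γ).toReal) γ := by
      exact tsum_subtype {γ : Γ | B γ = 0} fun γ => (A γ).toReal
    rw [hsub]
    refine Summable.tsum_le_tsum (fun γ => ?_) hind (summable_hs hα0 A B)
    by_cases h : B γ = 0
    · have : ({γ : Γ | B γ = 0}.indicator fun γ => (A γ).toReal) γ = (A γ).toReal :=
        Set.indicator_of_mem (show γ ∈ {γ : Γ | B γ = 0} from h) _
      rw [this, h]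
      simp
    · have : ({γ : Γ | B γ = 0}.indicator fun γ => (A γ).toReal) γ = 0 :=
        Set.indicator_of_notMem (show γ ∉ {γ : Γ | B γ = 0} from h) _
      rw [this]
      exact le_max_right _ _
end

section
/- Fix an integer k ≥ 2 and real numbers 0 = a_0 < a_1 < ⋯ < a_{k−1}. For PMFs A, B on a countable type Ω, define for each j ∈ {1, …, k−1} the set S_j := {ω : a_{j−1}·B(ω) < A(ω) ≤ a_j·B(ω)}. Then ∑_{j=1}^{k−1} (1/a_j)·(∑_{ω ∈ S_j} A(ω)) ≤ 1. -/
open scoped ENNReal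

/-- Key step in showing that the pessimistic Privacy Buckets estimate is a valid
privacy loss distribution: bucketing the outcomes by likelihood ratio
`A(ω)/B(ω) ∈ (a (j-1), a j]`, the total rescaled mass is at most `1`. -/
theorem privacy_buckets_mass_le_one {Ω : Type*} [Countable Ω] {k : ℕ} (hk : 2 ≤ k)
    (a : ℕ → ℝ) (ha0 : a 0 = 0) (hamono : ∀ i, i < k - 1 → a i < a (i + 1))
    (A B : PMF Ω) :
    ∑ j ∈ Finset.Icc 1 (k - 1),
      (1 / a j) *
        ∑' ω : {ω : Ω // a (j - 1) * (B ω).toReal < (A ω).toReal ∧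
                  (A ω).toReal ≤ a j * (B ω).toReal},
          (A ω.1).toReal ≤ 1 := by
  classical
  set S : ℕ → Set Ω := fun j => {ω | a (j - 1) * (B ω).toReal < (A ω).toReal ∧
      (A ω).toReal ≤ a j * (B ω).toReal} with hS
  -- monotonicity of `a` on `[0, k-1]`
  have key : ∀ j, j ≤ k - 1 → ∀ i, i ≤ j → a i ≤ a j := by
    intro j
    induction j with
    | zero =>
      intro _ i hi
      obtain rfl : i = 0 := Nat.le_zero.mp hi
      exact le_rfl
    | succ n ih =>
      intro hj i hi
      rcases Nat.eq_or_lt_of_le hi with h | h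
      · rw [h]
      · exact (ih (by omega) i (by omega)).trans (hamono n (by omega)).le
  have hpos : ∀ j, 1 ≤ j → j ≤ k - 1 → 0 < a j := by
    intro j h1 h2
    have h01 : a 0 < a 1 := hamono 0 (by omega)
    have h1j : a 1 ≤ a j := key j h2 1 h1
    linarith [ha0 ▸ h01]
  have hAsum : Summable (fun ω : Ω => (A ω).toReal) :=
    ENNReal.summable_toReal (by rw [A.tsum_coe]; exact ENNReal.one_ne_top)
  have hBsum : Summable (fun ω : Ω => (B ω).toReal) :=
    ENNReal.summable_toReal (by rw [B.tsum_coe]; exact ENNReal.one_ne_top)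
  -- buckets are pairwise disjoint
  have core : ∀ i j, 1 ≤ i → j ≤ k - 1 → i < j → ∀ ω : Ω,
      ω ∈ S i → ω ∈ S j → False := by
    intro i j hi hj hij ω hωi hωj
    obtain ⟨_, hup⟩ := hωi
    obtain ⟨hlo, _⟩ := hωj
    have hBnn : 0 ≤ (B ω).toReal := ENNReal.toReal_nonneg
    have hij' : a i ≤ a (j - 1) := key (j - 1) (by omega) i (by omega)
    have := mul_le_mul_of_nonneg_right hij' hBnn
    linarith
  have disjS : ∀ i ∈ Finset.Icc 1 (k - 1), ∀ j ∈ Finset.Icc 1 (k - 1),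
      i ≠ j → ∀ ω : Ω, ω ∈ S i → ω ∈ S j → False := by
    intro i hi j hj hne ω hωi hωj
    rw [Finset.mem_Icc] at hi hj
    rcases hne.lt_or_gt with h | h
    · exact core i j hi.1 hj.2 h ω hωi hωj
    · exact core j i hj.1 hi.2 h ω hωj hωi
  -- per-bucket bound
  have step : ∀ j ∈ Finset.Icc 1 (k - 1),
      (1 / a j) * (∑' ω : S j, (A ω.1).toReal) ≤ ∑' ω : S j, (B ω.1).toReal := by
    intro j hj
    rw [Finset.mem_Icc] at hj
    have haj := hpos j hj.1 hj.2
    have hsA : Summable (fun ω : S j => (A ω.1).toReal) := hAsum.subtype _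
    have hsB : Summable (fun ω : S j => (B ω.1).toReal) := hBsum.subtype _
    have h1 : (∑' ω : S j, (A ω.1).toReal) ≤ a j * ∑' ω : S j, (B ω.1).toReal := by
      rw [← tsum_mul_left]
      exact Summable.tsum_le_tsum (fun ω => ω.2.2) hsA (hsB.mul_left _)
    rw [one_div, inv_mul_le_iff₀ haj]
    exact h1
  -- total B-mass of buckets is at most 1
  have final : ∑ j ∈ Finset.Icc 1 (k - 1), (∑' ω : S j, (B ω.1).toReal) ≤ 1 := by
    set TB : ℕ → ℝ≥0∞ := fun j => ∑' ω : S j, B ω.1 with hTB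
    have hTBtop : ∀ j, TB j ≠ ∞ := by
      intro j
      refine ne_top_of_le_ne_top ENNReal.one_ne_top ?_
      calc TB j = ∑' ω : Ω, (S j).indicator (⇑B) ω := tsum_subtype (S j) (⇑B)
        _ ≤ ∑' ω : Ω, B ω := ENNReal.tsum_le_tsum (fun ω => Set.indicator_le_self _ _ ω)
        _ = 1 := B.tsum_coe
    have heq : ∀ j, (∑' ω : S j, (B ω.1).toReal) = (TB j).toReal := by
      intro j
      exact (ENNReal.tsum_toReal_eq (fun (ω : S j) => PMF.apply_ne_top B ω.1)).symm
    have hsum_le : ∑ j ∈ Finset.Icc 1 (k - 1), TB j ≤ 1 := by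
      have hrw : ∑ j ∈ Finset.Icc 1 (k - 1), TB j
          = ∑' ω : Ω, ∑ j ∈ Finset.Icc 1 (k - 1), (S j).indicator (⇑B) ω := by
        rw [Summable.tsum_finsetSum (fun _ _ => ENNReal.summable)]
        exact Finset.sum_congr rfl (fun j _ => tsum_subtype (S j) (⇑B))
      rw [hrw]
      calc ∑' ω : Ω, ∑ j ∈ Finset.Icc 1 (k - 1), (S j).indicator (⇑B) ω
          ≤ ∑' ω : Ω, B ω := by
            refine ENNReal.tsum_le_tsum (fun ω => ?_)
            by_cases hmem : ∃ j0 ∈ Finset.Icc 1 (k - 1), ω ∈ S j0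
            · obtain ⟨j0, hj0, hωj0⟩ := hmem
              rw [Finset.sum_eq_single_of_mem j0 hj0 ?_]
              · rw [Set.indicator_of_mem hωj0]
              · intro j hj hne
                rw [Set.indicator_of_notMem]
                intro hωj
                exact disjS j hj j0 hj0 hne ω hωj hωj0
            · push_neg at hmem
              rw [Finset.sum_eq_zero (fun j hj => Set.indicator_of_notMem (hmem j hj) _)]
              exact zero_le
        _ = 1 := B.tsum_coe
    calc ∑ j ∈ Finset.Icc 1 (k - 1), (∑' ω : S j, (B ω.1).toReal)
        = ∑ j ∈ Finset.Icc 1 (k - 1), (TB j).toReal :=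
          Finset.sum_congr rfl (fun j _ => heq j)
      _ = (∑ j ∈ Finset.Icc 1 (k - 1), TB j).toReal :=
          (ENNReal.toReal_sum (fun j _ => hTBtop j)).symm
      _ ≤ (1 : ℝ≥0∞).toReal := ENNReal.toReal_mono ENNReal.one_ne_top hsum_le
      _ = 1 := ENNReal.toReal_one
  exact le_trans (Finset.sum_le_sum step) final
end

section
/- Fix an integer k ≥ 2 and real numbers 0 = a_0 < a_1 < ⋯ < a_{k−1}. For PMFs A, B on a countable type Ω, define S_j := {ω : a_{j−1}·B(ω) < A(ω) ≤ a_j·B(ω)} for j ∈ {1, …, k−1}, and S_k := {ω : A(ω) > a_{k−1}·B(ω)}. Then for every i ∈ {0, 1, …, k−1}: D_{a_i}(A‖B) ≤ ∑_{j=1}^{k−1} max(1 − a_i/a_j, 0)·(∑_{ω ∈ S_j} A(ω)) + ∑_{ω ∈ S_k} A(ω). That is, at every grid point, the hockey-stick divergence of (A, B) (and hence its connect-the-dots pessimistic estimate) is no larger than the hockey-stick divergence of the pessimistic Privacy Buckets estimate. -/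
/-- At every grid point `a i`, the hockey-stick divergence of `(A, B)` is no larger
than the hockey-stick divergence of the pessimistic Privacy Buckets estimate, which
moves the mass of each bucket `(a (j-1), a j]` of likelihood ratios up to the bucket
endpoint `a j` (and all ratios above `a (k-1)` up to `+∞`). -/
theorem connect_the_dots_le_privacy_buckets {Ω : Type*} [Countable Ω] {k : ℕ}
    (hk : 2 ≤ k)
    (a : ℕ → ℝ) (ha0 : a 0 = 0) (hamono : ∀ i, i < k - 1 → a i < a (i + 1))
    (A B : PMF Ω) (i : ℕ) (hi : i ≤ k - 1) :
    hsDiv (a i) A B ≤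
      (∑ j ∈ Finset.Icc 1 (k - 1),
        max (1 - a i / a j) 0 *
          ∑' ω : {ω : Ω // a (j - 1) * (B ω).toReal < (A ω).toReal ∧
                    (A ω).toReal ≤ a j * (B ω).toReal},
            (A ω.1).toReal) +
      ∑' ω : {ω : Ω // a (k - 1) * (B ω).toReal < (A ω).toReal}, (A ω.1).toReal := by
  classical
  set Af : Ω → ℝ := fun ω => (A ω).toReal with hAf
  set Bf : Ω → ℝ := fun ω => (B ω).toReal with hBf
  have hA0 : ∀ ω, 0 ≤ Af ω := fun ω => ENNReal.toReal_nonneg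
  have hB0 : ∀ ω, 0 ≤ Bf ω := fun ω => ENNReal.toReal_nonneg
  have hAsum : Summable Af := ENNReal.summable_toReal (by rw [PMF.tsum_coe]; exact ENNReal.one_ne_top)
  -- monotonicity facts
  have ha_le : ∀ p q : ℕ, p ≤ q → q ≤ k - 1 → a p ≤ a q := by
    intro p q hpq hq
    induction q with
    | zero => simp_all
    | succ q ih =>
      rcases Nat.eq_or_lt_of_le hpq with h | h
      · exact h ▸ le_refl _
      · have hpq' : p ≤ q := Nat.lt_succ_iff.mp h
        have hq' : q ≤ k - 1 := le_trans (Nat.le_succ q) hq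
        exact le_trans (ih hpq' hq') (le_of_lt (hamono q (Nat.lt_of_succ_le hq)))
  have hk1 : 1 ≤ k - 1 := by omega
  have ha_pos : ∀ j, 1 ≤ j → j ≤ k - 1 → 0 < a j := by
    intro j h1 h2
    have : a 0 < a 1 := hamono 0 (by omega)
    have := ha_le 1 j h1 h2
    linarith [ha0 ▸ (hamono 0 (by omega) : a 0 < a 1)]
  have hai0 : 0 ≤ a i := ha0 ▸ ha_le 0 i (Nat.zero_le i) hi
  -- the sets
  set S : ℕ → Set Ω := fun j => {ω | a (j - 1) * Bf ω < Af ω ∧ Af ω ≤ a j * Bf ω} with hS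
  set Sk : Set Ω := {ω | a (k - 1) * Bf ω < Af ω} with hSk
  set c : ℕ → ℝ := fun j => max (1 - a i / a j) 0 with hc
  have hc0 : ∀ j, 0 ≤ c j := fun j => le_max_right _ _
  set f : Ω → ℝ := fun ω => max (Af ω - a i * Bf ω) 0 with hf
  set g : Ω → ℝ := fun ω =>
    (∑ j ∈ Finset.Icc 1 (k - 1), c j * (S j).indicator Af ω) + Sk.indicator Af ω with hg
  -- summability of pieces
  have hsum_ind : ∀ s : Set Ω, Summable (s.indicator Af) := fun s => hAsum.indicator s
  have hsum_term : ∀ j ∈ Finset.Icc 1 (k - 1), Summable (fun ω => c j * (S j).indicator Af ω) :=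
    fun j _ => (hsum_ind (S j)).mul_left (c j)
  have hgsum : Summable g := (summable_sum hsum_term).add (hsum_ind Sk)
  have hfsum : Summable f := by
    apply Summable.of_nonneg_of_le (fun ω => le_max_right _ _) _ hAsum
    intro ω
    have : a i * Bf ω ≥ 0 := mul_nonneg hai0 (hB0 ω)
    simp only [hf, max_le_iff]
    constructor <;> [linarith [hA0 ω]; exact hA0 ω]
  -- pointwise bound
  have hptw : ∀ ω, f ω ≤ g ω := by
    intro ω
    have hterm0 : ∀ j ∈ Finset.Icc 1 (k - 1), 0 ≤ c j * (S j).indicator Af ω := by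
      intro j _
      exact mul_nonneg (hc0 j) (Set.indicator_nonneg (fun ω _ => hA0 ω) ω)
    have hSk0 : 0 ≤ Sk.indicator Af ω := Set.indicator_nonneg (fun ω _ => hA0 ω) ω
    by_cases hk' : a (k - 1) * Bf ω < Af ω
    · -- in Sk
      have h1 : Sk.indicator Af ω = Af ω := Set.indicator_of_mem (show ω ∈ Sk from hk') Af
      have h2 : f ω ≤ Af ω := by
        have : a i * Bf ω ≥ 0 := mul_nonneg hai0 (hB0 ω)
        simp only [hf, max_le_iff]
        constructor <;> [linarith [hA0 ω]; exact hA0 ω]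
      calc f ω ≤ Af ω := h2
        _ = (0:ℝ) + Sk.indicator Af ω := by rw [h1]; ring
        _ ≤ g ω := add_le_add (Finset.sum_nonneg hterm0) le_rfl
    · push_neg at hk'
      by_cases hApos : 0 < Af ω
      · -- find the bucket
        have hex : ∃ j, (Af ω ≤ a j * Bf ω) := ⟨k - 1, hk'⟩
        set j₀ := Nat.find hex with hj₀
        have hj₀le : j₀ ≤ k - 1 := Nat.find_le hk'
        have hj₀1 : 1 ≤ j₀ := by
          rcases Nat.eq_zero_or_pos j₀ with h | h
          · exfalso
            have := Nat.find_spec hex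
            rw [← hj₀, h, ha0] at this
            simp at this
            linarith
          · exact h
        have hmem : ω ∈ S j₀ := by
          constructor
          · have hne : ¬ (Af ω ≤ a (j₀ - 1) * Bf ω) := Nat.find_min hex (by omega)
            linarith [not_le.mp hne]
          · exact Nat.find_spec hex
        have hj₀mem : j₀ ∈ Finset.Icc 1 (k - 1) := Finset.mem_Icc.mpr ⟨hj₀1, hj₀le⟩
        have haj₀ : 0 < a j₀ := ha_pos j₀ hj₀1 hj₀le
        -- f ω ≤ c j₀ * Af ω
        have key : f ω ≤ c j₀ * Af ω := by
          have hub : Af ω ≤ a j₀ * Bf ω := hmem.2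
          by_cases hcase : a i < a j₀
          · have hdivlt : a i / a j₀ < 1 := (div_lt_one haj₀).mpr hcase
            have hdiv0 : 0 ≤ a i / a j₀ := div_nonneg hai0 haj₀.le
            have hcval : c j₀ = 1 - a i / a j₀ := max_eq_left (by linarith)
            have h1 : a i / a j₀ * Af ω ≤ a i / a j₀ * (a j₀ * Bf ω) :=
              mul_le_mul_of_nonneg_left hub hdiv0
            have h2 : a i / a j₀ * (a j₀ * Bf ω) = a i * Bf ω := by field_simp
            rw [hcval]
            apply max_le
            · nlinarith
            · exact mul_nonneg (by linarith) hApos.le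
          · -- a j₀ ≤ a i : f ω = 0
            push_neg at hcase
            have : Af ω - a i * Bf ω ≤ 0 := by
              have : a j₀ * Bf ω ≤ a i * Bf ω := mul_le_mul_of_nonneg_right hcase (hB0 ω)
              linarith
            have : f ω = 0 := max_eq_right this
            rw [this]
            exact mul_nonneg (hc0 j₀) (le_of_lt hApos)
        calc f ω ≤ c j₀ * Af ω := key
          _ = c j₀ * (S j₀).indicator Af ω := by rw [Set.indicator_of_mem hmem]
          _ ≤ ∑ j ∈ Finset.Icc 1 (k - 1), c j * (S j).indicator Af ω :=
              Finset.single_le_sum hterm0 hj₀mem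
          _ ≤ g ω := le_add_of_nonneg_right hSk0
      · -- Af ω = 0
        push_neg at hApos
        have hA0' : Af ω = 0 := le_antisymm hApos (hA0 ω)
        have : f ω = 0 := by
          apply max_eq_right
          have : 0 ≤ a i * Bf ω := mul_nonneg hai0 (hB0 ω)
          linarith
        rw [this]
        exact add_nonneg (Finset.sum_nonneg hterm0) hSk0
  -- combine
  have hmain : hsDiv (a i) A B ≤ ∑' ω, g ω := Summable.tsum_le_tsum hptw hfsum hgsum
  refine le_trans hmain (le_of_eq ?_)
  rw [hg]
  rw [Summable.tsum_add (summable_sum hsum_term) (hsum_ind Sk), Summable.tsum_finsetSum hsum_term]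
  congr 1
  · apply Finset.sum_congr rfl
    intro j _
    rw [tsum_mul_left, ← tsum_subtype (S j) Af]; rfl
  · rw [← tsum_subtype Sk Af]; rfl
end

section
/- Let ε > 0 be a real number and let A, B be the PMFs on Bool given by A(false) = B(true) = e^ε/(e^ε + 1) and A(true) = B(false) = 1/(e^ε + 1). Let γ be a real number with 0 < γ < min(e^ε − e^{−ε}, e^{−ε}), and set a_1 := e^{−ε} − γ and a_2 := e^{−ε} + γ. Then for any PMFs P, Q on a countable type Ω such that (a) for every ω with P(ω) > 0, either Q(ω) = 0 or P(ω) = a_1·Q(ω) or P(ω) = a_2·Q(ω), and (b) D_α(P‖Q) ≤ D_α(A‖B) for all real α ≥ 0, it must hold that D_{a_1}(P‖Q) < 1 − a_1 or D_{a_2}(P‖Q) < (e^ε − a_2)/(e^ε + 1). (Here 1 − a_1 = D_{a_1}(A‖B) and (e^ε − a_2)/(e^ε + 1) = D_{a_2}(A‖B), so no optimistic estimate with privacy loss distribution supported on {a_1, a_2, +∞} can match the true curve at both a_1 and a_2; consequently there is no 'best' optimistic estimate.) -/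
/-- No best optimistic estimate: for the `ε`-DP binary randomized response pair
`(A, B)` and discretization points `a₁ = e^{-ε} - γ`, `a₂ = e^{-ε} + γ`, no pair
`(P, Q)` dominated by `(A, B)` whose privacy loss distribution is supported on
`{a₁, a₂, +∞}` can match the hockey-stick curve of `(A, B)` at both `a₁` and `a₂`. -/
theorem no_best_optimistic_estimate {Ω : Type*} [Countable Ω]
    (ε : ℝ) (hε : 0 < ε)
    (A B : PMF Bool)
    (hAf : (A false).toReal = Real.exp ε / (Real.exp ε + 1))
    (hAt : (A true).toReal = 1 / (Real.exp ε + 1))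
    (hBt : (B true).toReal = Real.exp ε / (Real.exp ε + 1))
    (hBf : (B false).toReal = 1 / (Real.exp ε + 1))
    (γ : ℝ) (hγ0 : 0 < γ)
    (hγ : γ < min (Real.exp ε - Real.exp (-ε)) (Real.exp (-ε)))
    (a₁ a₂ : ℝ) (ha₁ : a₁ = Real.exp (-ε) - γ) (ha₂ : a₂ = Real.exp (-ε) + γ)
    (P Q : PMF Ω)
    (hsupp : ∀ ω, 0 < P ω →
      Q ω = 0 ∨ (P ω).toReal = a₁ * (Q ω).toReal ∨ (P ω).toReal = a₂ * (Q ω).toReal)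
    (hdom : ∀ α : ℝ, 0 ≤ α → hsDiv α P Q ≤ hsDiv α A B) :
    hsDiv a₁ P Q < 1 - a₁ ∨ hsDiv a₂ P Q < (Real.exp ε - a₂) / (Real.exp ε + 1) := by
  by_contra hcon
  push_neg at hcon
  obtain ⟨h1, h2⟩ := hcon
  subst ha₁
  subst ha₂
  set E := Real.exp ε with hE
  set m := Real.exp (-ε) with hm
  have hEpos : 0 < E := Real.exp_pos ε
  have hmpos : 0 < m := Real.exp_pos (-ε)
  have hE1 : 1 < E := by
    have := Real.exp_lt_exp.mpr hε
    rwa [Real.exp_zero] at this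
  have hmE : m * E = 1 := by
    rw [hm, hE, ← Real.exp_add]; simp
  have hγm : γ < m := lt_of_lt_of_le hγ (min_le_right _ _)
  have hγE : γ < E - m := lt_of_lt_of_le hγ (min_le_left _ _)
  have ha₁pos : 0 < m - γ := by linarith
  have ha₂pos : 0 < m + γ := by linarith
  have hE1pos : (0:ℝ) < E + 1 := by linarith
  -- termwise identity
  have key : ∀ ω : Ω, max ((P ω).toReal - (m - γ) * (Q ω).toReal) 0
      + max ((P ω).toReal - (m + γ) * (Q ω).toReal) 0
      = 2 * max ((P ω).toReal - m * (Q ω).toReal) 0 := by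
    intro ω
    set p := (P ω).toReal with hpdef
    set q := (Q ω).toReal with hqdef
    have hq0 : 0 ≤ q := ENNReal.toReal_nonneg
    have hp0' : 0 ≤ p := ENNReal.toReal_nonneg
    have hγq : 0 ≤ γ * q := mul_nonneg hγ0.le hq0
    rcases eq_or_lt_of_le (show (0:ENNReal) ≤ P ω from zero_le) with hp | hp
    · have hp0 : p = 0 := by rw [hpdef, ← hp]; simp
      have e1 : max (p - (m - γ) * q) 0 = 0 := max_eq_right (by
        rw [hp0, zero_sub, neg_nonpos]; exact mul_nonneg ha₁pos.le hq0)
      have e2 : max (p - (m + γ) * q) 0 = 0 := max_eq_right (by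
        rw [hp0, zero_sub, neg_nonpos]; exact mul_nonneg ha₂pos.le hq0)
      have e3 : max (p - m * q) 0 = 0 := max_eq_right (by
        rw [hp0, zero_sub, neg_nonpos]; exact mul_nonneg hmpos.le hq0)
      rw [e1, e2, e3]; ring
    · rcases hsupp ω hp with hc | hc | hc
      · have hq' : q = 0 := by rw [hqdef, hc]; simp
        have e1 : max (p - (m - γ) * q) 0 = p := by
          rw [hq', mul_zero, sub_zero]; exact max_eq_left hp0'
        have e2 : max (p - (m + γ) * q) 0 = p := by
          rw [hq', mul_zero, sub_zero]; exact max_eq_left hp0'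
        have e3 : max (p - m * q) 0 = p := by
          rw [hq', mul_zero, sub_zero]; exact max_eq_left hp0'
        rw [e1, e2, e3]; ring
      · rw [← hpdef, ← hqdef] at hc
        have e1 : max (p - (m - γ) * q) 0 = 0 := max_eq_right (by
          rw [hc]; ring_nf; linarith [hγq])
        have e2 : max (p - (m + γ) * q) 0 = 0 := max_eq_right (by
          have h' : p - (m + γ) * q = -(2 * (γ * q)) := by rw [hc]; ring
          rw [h']; linarith [hγq])
        have e3 : max (p - m * q) 0 = 0 := max_eq_right (by
          have h' : p - m * q = -(γ * q) := by rw [hc]; ring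
          rw [h']; linarith [hγq])
        rw [e1, e2, e3]; ring
      · rw [← hpdef, ← hqdef] at hc
        have e1 : max (p - (m - γ) * q) 0 = 2 * (γ * q) := by
          have h' : p - (m - γ) * q = 2 * (γ * q) := by rw [hc]; ring
          rw [h']; exact max_eq_left (by linarith [hγq])
        have e2 : max (p - (m + γ) * q) 0 = 0 := max_eq_right
          (le_of_eq (by rw [hc]; ring))
        have e3 : max (p - m * q) 0 = γ * q := by
          have h' : p - m * q = γ * q := by rw [hc]; ring
          rw [h']; exact max_eq_left hγq
        rw [e1, e2, e3]; ring
  -- summability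
  have hPsum : Summable (fun ω => (P ω).toReal) := by
    apply ENNReal.summable_toReal
    rw [P.tsum_coe]
    exact ENNReal.one_ne_top
  have hS : ∀ a : ℝ, 0 ≤ a →
      Summable (fun ω => max ((P ω).toReal - a * (Q ω).toReal) 0) := by
    intro a ha
    apply hPsum.of_nonneg_of_le (fun ω => le_max_right _ _)
    intro ω
    have hq0 : 0 ≤ (Q ω).toReal := ENNReal.toReal_nonneg
    exact max_le (by linarith [mul_nonneg ha hq0]) ENNReal.toReal_nonneg
  have hsum_eq : hsDiv (m - γ) P Q + hsDiv (m + γ) P Q = 2 * hsDiv m P Q := by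
    unfold hsDiv
    rw [← Summable.tsum_add (hS (m - γ) ha₁pos.le) (hS (m + γ) ha₂pos.le), ← tsum_mul_left]
    exact tsum_congr key
  -- compute hsDiv m A B
  have hAB : hsDiv m A B = (E - m) / (E + 1) := by
    unfold hsDiv
    rw [tsum_bool, hAf, hAt, hBf, hBt]
    have h2' : 1 / (E + 1) - m * (E / (E + 1)) = 0 := by
      field_simp
      linarith [hmE]
    have h1' : max (E / (E + 1) - m * (1 / (E + 1))) 0
        = E / (E + 1) - m * (1 / (E + 1)) := by
      apply max_eq_left
      rw [mul_one_div, div_sub_div_same]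
      exact div_nonneg (by linarith) hE1pos.le
    rw [h1', h2', max_self]
    rw [mul_one_div, div_sub_div_same, add_zero]
  have hdm := hdom m hmpos.le
  rw [hAB] at hdm
  have hfin : (1 - (m - γ)) + (E - (m + γ)) / (E + 1) ≤ 2 * ((E - m) / (E + 1)) := by
    calc (1 - (m - γ)) + (E - (m + γ)) / (E + 1)
        ≤ hsDiv (m - γ) P Q + hsDiv (m + γ) P Q := add_le_add h1 h2
    _ = 2 * hsDiv m P Q := hsum_eq
    _ ≤ 2 * ((E - m) / (E + 1)) := by linarith
  have h4 := mul_le_mul_of_nonneg_right hfin hE1pos.le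
  field_simp at h4
  nlinarith [mul_pos hγ0 hEpos, hmE]
end

section
/- Let P, Q be PMFs on a countable type Ω such that D_α(P‖Q) ≤ max(1 − α, 0) for all real α ≥ 0. Then there exists ω ∈ Ω with P(ω) > 0 and P(ω) = Q(ω); that is, 0 belongs to the support of the privacy loss distribution of (P, Q). -/
/-- If `(P, Q)` is dominated by a pair with hockey-stick curve `α ↦ max (1 - α) 0`
(the curve of any pair `(A, A)`), then `0` must belong to the support of the privacy
loss distribution of `(P, Q)`: there is some outcome with `P(ω) > 0` and
`P(ω) = Q(ω)`. -/
theorem zero_in_support_of_dominated {Ω : Type*} [Countable Ω] (P Q : PMF Ω)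
    (hdom : ∀ α : ℝ, 0 ≤ α → hsDiv α P Q ≤ max (1 - α) 0) :
    ∃ ω, 0 < P ω ∧ P ω = Q ω := by
  have hPtop : ∀ ω, P ω ≠ ⊤ := fun ω => P.apply_ne_top ω
  have hQtop : ∀ ω, Q ω ≠ ⊤ := fun ω => Q.apply_ne_top ω
  have hPsum : Summable (fun ω => (P ω).toReal) :=
    ENNReal.summable_toReal (by rw [P.tsum_coe]; exact ENNReal.one_ne_top)
  have hQsum : Summable (fun ω => (Q ω).toReal) :=
    ENNReal.summable_toReal (by rw [Q.tsum_coe]; exact ENNReal.one_ne_top)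
  have hPt : ∑' ω, (P ω).toReal = 1 := by
    rw [← ENNReal.tsum_toReal_eq hPtop, P.tsum_coe, ENNReal.toReal_one]
  have hQt : ∑' ω, (Q ω).toReal = 1 := by
    rw [← ENNReal.tsum_toReal_eq hQtop, Q.tsum_coe, ENNReal.toReal_one]
  -- From α = 1 we get hsDiv 1 P Q ≤ 0
  have h1 : hsDiv 1 P Q ≤ 0 := by
    have := hdom 1 zero_le_one
    simpa using this
  set g : Ω → ℝ := fun ω => max ((P ω).toReal - 1 * (Q ω).toReal) 0 with hg
  have hgnn : ∀ ω, 0 ≤ g ω := fun ω => le_max_right _ _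
  have hgsum : Summable g := by
    apply Summable.of_nonneg_of_le hgnn _ hPsum
    intro ω
    have hq : 0 ≤ (Q ω).toReal := ENNReal.toReal_nonneg
    have hp : 0 ≤ (P ω).toReal := ENNReal.toReal_nonneg
    simp only [hg, one_mul]
    exact max_le (by linarith) hp
  have hle : ∀ ω, (P ω).toReal ≤ (Q ω).toReal := by
    intro ω
    have h2 : g ω ≤ ∑' ω, g ω := Summable.le_tsum hgsum ω (fun i _ => hgnn i)
    have h3 : g ω ≤ 0 := h2.trans h1
    have h4 : (P ω).toReal - 1 * (Q ω).toReal ≤ g ω := le_max_left _ _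
    simpa using h4.trans h3
  have heq : ∀ ω, (P ω).toReal = (Q ω).toReal := by
    intro ω
    by_contra hne
    have hlt : (P ω).toReal < (Q ω).toReal := lt_of_le_of_ne (hle ω) hne
    have : (∑' ω, (P ω).toReal) < ∑' ω, (Q ω).toReal :=
      Summable.tsum_lt_tsum (fun i => hle i) hlt hPsum hQsum
    rw [hPt, hQt] at this
    exact lt_irrefl _ this
  have heq' : ∀ ω, P ω = Q ω := fun ω =>
    (ENNReal.toReal_eq_toReal_iff' (hPtop ω) (hQtop ω)).mp (heq ω)
  obtain ⟨ω, hω⟩ := P.support_nonempty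
  exact ⟨ω, pos_iff_ne_zero.mpr hω, heq' ω⟩
end

section
/- Let h : ℝ → ℝ be convex on [0, ∞) and differentiable on [0, ∞), and let a, b be real numbers with 0 ≤ a < b. Let f_a, f_b be real numbers with f_a ≤ h(a) and f_b ≤ h(a) + (b − a)·h′(a). Then for every real α with a ≤ α ≤ b: ((b − α)·f_a + (α − a)·f_b)/(b − a) ≤ h(α). -/
/-- Case III of the correctness of the optimistic PLD construction: a segment whose
left endpoint lies below `h a` and whose right endpoint lies below the tangent line
to `h` at `a` (evaluated at `b`) stays below `h` on `[a, b]`. -/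
theorem segment_below_forward_tangent (h h' : ℝ → ℝ)
    (hconv : ConvexOn ℝ (Set.Ici (0 : ℝ)) h)
    (hderiv : ∀ x ∈ Set.Ici (0 : ℝ), HasDerivWithinAt h (h' x) (Set.Ici 0) x)
    (a b : ℝ) (ha : 0 ≤ a) (hab : a < b)
    (fa fb : ℝ) (hfa : fa ≤ h a) (hfb : fb ≤ h a + (b - a) * h' a) :
    ∀ α : ℝ, a ≤ α → α ≤ b → ((b - α) * fa + (α - a) * fb) / (b - a) ≤ h α := by
  intro α hαa hαb
  have hba : (0:ℝ) < b - a := by linarith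
  -- tangent line at a lies below h on [a, ∞) ∩ Ici 0
  have htan : h a + (α - a) * h' a ≤ h α := by
    rcases eq_or_lt_of_le hαa with rfl | hlt
    · simp
    · have := hconv.le_slope_of_hasDerivWithinAt (Set.mem_Ici.mpr ha)
        (Set.mem_Ici.mpr (le_trans ha hαa)) hlt (hderiv a (Set.mem_Ici.mpr ha))
      rw [slope_def_field] at this
      have h2 : (α - a) * h' a ≤ h α - h a := by
        have := mul_le_mul_of_nonneg_left this (by linarith : (0:ℝ) ≤ α - a)
        calc (α - a) * h' a ≤ (α - a) * ((h α - h a) / (α - a)) := this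
          _ = h α - h a := by
            rw [mul_div_cancel₀ _ (by linarith : α - a ≠ 0)]
      linarith
  have hnum : (b - α) * fa + (α - a) * fb ≤ (b - a) * (h a + (α - a) * h' a) := by
    have h1 : (b - α) * fa ≤ (b - α) * h a :=
      mul_le_mul_of_nonneg_left hfa (by linarith)
    have h2 : (α - a) * fb ≤ (α - a) * (h a + (b - a) * h' a) :=
      mul_le_mul_of_nonneg_left hfb (by linarith)
    nlinarith
  calc ((b - α) * fa + (α - a) * fb) / (b - a)
      ≤ ((b - a) * (h a + (α - a) * h' a)) / (b - a) := by
        exact div_le_div_of_nonneg_right hnum hba.le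
    _ = h a + (α - a) * h' a := by field_simp
    _ ≤ h α := htan
end

section
/- Fix an integer k ≥ 2, real numbers 0 = a_0 < a_1 < ⋯ < a_{k−1}, and an index i* ∈ {1, …, k−1} with a_{i*} = 1. Let h : ℝ → ℝ be convex on [0, ∞), differentiable on [0, ∞), non-increasing on [0, ∞), with h(0) = 1 and h(α) ≥ max(1 − α, 0) for all α ≥ 0. Let g : ℝ → ℝ be a function that is affine on each grid interval, i.e., for every i ∈ {0, …, k−2} and every α ∈ [a_i, a_{i+1}], g(α) = ((a_{i+1} − α)·g(a_i) + (α − a_i)·g(a_{i+1}))/(a_{i+1} − a_i). Suppose that: g(a_0) ≤ 1; g(a_i) ≤ h(a_{i−1}) + (a_i − a_{i−1})·h′(a_{i−1}) for every i ∈ {1, …, i*}; g(a_i) ≤ h(a_{i+1}) − (a_{i+1} − a_i)·h′(a_{i+1}) for every i ∈ {i*, …, k−2}; and g(a_{k−1}) ≤ 0. Then g(α) ≤ h(α) for every real α with 0 ≤ α ≤ a_{k−1}. -/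
/-- A chord whose endpoints lie below an affine function lies below it. -/
lemma chord_le_affine {x y t gx gy c m : ℝ} (hxy : x < y)
    (hx : gx ≤ c + m * x) (hy : gy ≤ c + m * y) (ht1 : x ≤ t) (ht2 : t ≤ y) :
    ((y - t) * gx + (t - x) * gy) / (y - x) ≤ c + m * t := by
  rw [div_le_iff₀ (sub_pos.2 hxy)]
  nlinarith [mul_le_mul_of_nonneg_left hx (sub_nonneg.2 ht2),
    mul_le_mul_of_nonneg_left hy (sub_nonneg.2 ht1)]

/-- Correctness (domination) of the optimistic PLD construction: if `g` is piecewise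
linear on the grid `0 = a 0 < a 1 < ⋯ < a (k-1)` (with `a i* = 1`) and its grid
values lie below the forward tangent-line candidates (for grid points up to `i*`),
below the backward tangent-line candidates (for grid points from `i*` on), below `1`
at `a 0`, and below `0` at `a (k-1)`, then `g` lies below the hockey-stick curve `h`
on `[0, a (k-1)]`. -/
theorem optimistic_construction_dominated {k : ℕ} (hk : 2 ≤ k)
    (a : ℕ → ℝ) (ha0 : a 0 = 0) (hamono : ∀ i, i < k - 1 → a i < a (i + 1))
    (istar : ℕ) (histar1 : 1 ≤ istar) (histark : istar ≤ k - 1) (haistar : a istar = 1)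
    (h h' : ℝ → ℝ)
    (hconv : ConvexOn ℝ (Set.Ici (0 : ℝ)) h)
    (hderiv : ∀ x ∈ Set.Ici (0 : ℝ), HasDerivWithinAt h (h' x) (Set.Ici 0) x)
    (hanti : AntitoneOn h (Set.Ici (0 : ℝ)))
    (hh0 : h 0 = 1)
    (hlb : ∀ α : ℝ, 0 ≤ α → max (1 - α) 0 ≤ h α)
    (g : ℝ → ℝ)
    (hgaffine : ∀ i, i ≤ k - 2 → ∀ α : ℝ, a i ≤ α → α ≤ a (i + 1) →
      g α = ((a (i + 1) - α) * g (a i) + (α - a i) * g (a (i + 1))) / (a (i + 1) - a i))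
    (hg0 : g (a 0) ≤ 1)
    (hgfwd : ∀ i, 1 ≤ i → i ≤ istar →
      g (a i) ≤ h (a (i - 1)) + (a i - a (i - 1)) * h' (a (i - 1)))
    (hgbwd : ∀ i, istar ≤ i → i ≤ k - 2 →
      g (a i) ≤ h (a (i + 1)) - (a (i + 1) - a i) * h' (a (i + 1)))
    (hglast : g (a (k - 1)) ≤ 0) :
    ∀ α : ℝ, 0 ≤ α → α ≤ a (k - 1) → g α ≤ h α := by
  -- monotonicity of the grid
  have hle : ∀ i j : ℕ, i ≤ j → j ≤ k - 1 → a i ≤ a j := by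
    intro i j hij hj
    induction j with
    | zero => interval_cases i; exact le_rfl
    | succ n ih =>
      rcases Nat.lt_or_ge i (n + 1) with hlt | hge
      · exact le_trans (ih (Nat.lt_succ_iff.mp hlt) (by omega))
          (le_of_lt (hamono n (by omega)))
      · have : i = n + 1 := by omega
        simp [this]
  have hnn : ∀ i : ℕ, i ≤ k - 1 → (0 : ℝ) ≤ a i := by
    intro i hi
    have := hle 0 i (Nat.zero_le _) hi
    linarith [this, ha0.le, ha0.ge]
  -- tangent lines lie below a convex function
  have tangent : ∀ x : ℝ, 0 ≤ x → ∀ y : ℝ, 0 ≤ y → h x + (y - x) * h' x ≤ h y := by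
    intro x hx y hy
    rcases lt_trichotomy x y with hxy | rfl | hxy
    · have hs := hconv.le_slope_of_hasDerivWithinAt (Set.mem_Ici.2 hx) (Set.mem_Ici.2 hy)
        hxy (hderiv x (Set.mem_Ici.2 hx))
      rw [slope_def_field, le_div_iff₀ (sub_pos.2 hxy)] at hs
      nlinarith
    · simp
    · have hs := hconv.slope_le_of_hasDerivWithinAt (Set.mem_Ici.2 hy) (Set.mem_Ici.2 hx)
        hxy (hderiv x (Set.mem_Ici.2 hx))
      rw [slope_def_field, div_le_iff₀ (sub_pos.2 hxy)] at hs
      nlinarith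
  -- grid values of g lie below h
  have hgrid : ∀ i : ℕ, i ≤ k - 1 → g (a i) ≤ h (a i) := by
    intro i hi
    rcases Nat.eq_zero_or_pos i with rfl | hpos
    · rw [ha0, hh0]; rw [ha0] at hg0; exact hg0
    rcases le_or_gt i istar with hile | hgt
    · have hfwd := hgfwd i hpos hile
      have ht := tangent (a (i - 1)) (hnn (i - 1) (by omega)) (a i) (hnn i hi)
      linarith
    · rcases Nat.lt_or_ge i (k - 1) with hlt | hge
      · have hbwd := hgbwd i (le_of_lt hgt) (by omega)
        have ht := tangent (a (i + 1)) (hnn (i + 1) (by omega)) (a i) (hnn i hi)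
        nlinarith
      · have : i = k - 1 := by omega
        subst this
        have := hlb (a (k - 1)) (hnn (k - 1) le_rfl)
        have h0 : (0 : ℝ) ≤ h (a (k - 1)) := le_trans (le_max_right _ _) this
        linarith
  -- main induction: if α ≤ a j then g α ≤ h α
  have main : ∀ j : ℕ, j ≤ k - 1 → ∀ α : ℝ, 0 ≤ α → α ≤ a j → g α ≤ h α := by
    intro j
    induction j with
    | zero =>
      intro _ α hα0 hαj
      rw [ha0] at hαj
      have : α = 0 := le_antisymm hαj hα0
      subst this
      calc g 0 = g (a 0) := by rw [ha0]
        _ ≤ 1 := hg0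
        _ = h 0 := hh0.symm
    | succ n ih =>
      intro hj α hα0 hαj
      rcases le_or_gt α (a n) with hle' | hgt'
      · exact ih (by omega) α hα0 hle'
      have hn2 : n ≤ k - 2 := by omega
      have hlow : a n ≤ α := hgt'.le
      have hd : a n < a (n + 1) := hamono n (by omega)
      rw [hgaffine n hn2 α hlow hαj]
      rcases Nat.lt_or_ge n istar with hcase | hcase
      · -- forward tangent at a n
        set c := h (a n) - a n * h' (a n) with hc
        set m := h' (a n) with hm
        have hx : g (a n) ≤ c + m * a n := by
          have := hgrid n (by omega); simp [hc, hm]; linarith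
        have hy : g (a (n + 1)) ≤ c + m * a (n + 1) := by
          have := hgfwd (n + 1) (by omega) (by omega)
          simp only [Nat.add_sub_cancel] at this
          simp only [hc, hm]; linarith
        have hch := chord_le_affine hd hx hy hlow hαj
        have ht := tangent (a n) (hnn n (by omega)) α hα0
        calc ((a (n + 1) - α) * g (a n) + (α - a n) * g (a (n + 1))) / (a (n + 1) - a n)
            ≤ c + m * α := hch
          _ ≤ h α := by simp only [hc, hm] at *; linarith
      · -- backward tangent at a (n + 1)
        set c := h (a (n + 1)) - a (n + 1) * h' (a (n + 1)) with hc
        set m := h' (a (n + 1)) with hm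
        have hx : g (a n) ≤ c + m * a n := by
          have := hgbwd n hcase hn2
          simp only [hc, hm]; linarith
        have hy : g (a (n + 1)) ≤ c + m * a (n + 1) := by
          have := hgrid (n + 1) (by omega); simp only [hc, hm]; linarith
        have hch := chord_le_affine hd hx hy hlow hαj
        have ht := tangent (a (n + 1)) (hnn (n + 1) (by omega)) α hα0
        calc ((a (n + 1) - α) * g (a n) + (α - a n) * g (a (n + 1))) / (a (n + 1) - a n)
            ≤ c + m * α := hch
          _ ≤ h α := by simp only [hc, hm] at *; linarith
  intro α hα0 hαk
  exact main (k - 1) le_rfl α hα0 hαk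
end
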